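/- Suppose v is a fixed point of the recursive stopping problem with F(0)=1 (zero delay): v(x) = sup_τ E_x[e^{-rτ}(pψ(X_τ)+(1−p)v(X_τ))], the process t ↦ e^{-rt}v(X_t) is a P_x-supermartingale, and v ≥ φ with ψ ≥ φ. Then v(x) = sup_τ E_x[e^{-rτ}ψ(X_τ)] for all x. -/

import Mathlib

open MeasureTheory Set

/-- If `v` is a fixed point of the recursive stopping problem with zero delay
(`F(0) = 1`), i.e. `v(x) = sup_τ E_x[e^{-rτ}(pψ(X_τ) + (1-p)v(X_τ))]`, the discounted
value process `t ↦ e^{-rt} v(X_t)` is a `P_x`-supermartingale (expressed through the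
optional sampling inequality), and `φ ≤ v`, `φ ≤ ψ`, then
`v(x) = sup_τ E_x[e^{-rτ} ψ(X_τ)]` for every `x`. -/
theorem stmt5 {d : ℕ} {Ω : Type*} {m : MeasurableSpace Ω}
    (ℱ : Filtration ℝ m)
    (P : EuclideanSpace ℝ (Fin d) → Measure Ω)
    (hP : ∀ x, IsProbabilityMeasure (P x))
    (X : ℝ → Ω → EuclideanSpace ℝ (Fin d))
    (r p : ℝ) (hr : 0 < r) (hp : p ∈ Set.Ioo (0 : ℝ) 1)
    (φ ψ v : EuclideanSpace ℝ (Fin d) → ℝ)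
    (hφc : Continuous φ) (hψc : Continuous ψ) (hvc : Continuous v)
    (hφ0 : ∀ x, 0 ≤ φ x) (hφψ : ∀ x, φ x ≤ ψ x) (hφv : ∀ x, φ x ≤ v x)
    (hinit : ∀ x, ∀ᵐ ω ∂(P x), X 0 ω = x)
    (hintψ : ∀ x, ∀ τ : {τ : Ω → ℝ // IsStoppingTime ℱ (fun ω => (τ ω : WithTop ℝ))},
      Integrable (fun ω => Real.exp (-r * τ.1 ω) * ψ (X (τ.1 ω) ω)) (P x))
    (hintv : ∀ x, ∀ τ : {τ : Ω → ℝ // IsStoppingTime ℱ (fun ω => (τ ω : WithTop ℝ))},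
      Integrable (fun ω => Real.exp (-r * τ.1 ω) * v (X (τ.1 ω) ω)) (P x))
    (hBddψ : ∀ x, BddAbove (Set.range fun τ : {τ : Ω → ℝ // IsStoppingTime ℱ (fun ω => (τ ω : WithTop ℝ))} =>
      ∫ ω, Real.exp (-r * τ.1 ω) * ψ (X (τ.1 ω) ω) ∂(P x)))
    (hBddv : ∀ x, BddAbove (Set.range fun τ : {τ : Ω → ℝ // IsStoppingTime ℱ (fun ω => (τ ω : WithTop ℝ))} =>
      ∫ ω, Real.exp (-r * τ.1 ω) *
        (p * ψ (X (τ.1 ω) ω) + (1 - p) * v (X (τ.1 ω) ω)) ∂(P x)))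
    (hfix : ∀ x, v x = ⨆ τ : {τ : Ω → ℝ // IsStoppingTime ℱ (fun ω => (τ ω : WithTop ℝ))},
      ∫ ω, Real.exp (-r * τ.1 ω) *
        (p * ψ (X (τ.1 ω) ω) + (1 - p) * v (X (τ.1 ω) ω)) ∂(P x))
    (hsuper : ∀ x, ∀ τ : {τ : Ω → ℝ // IsStoppingTime ℱ (fun ω => (τ ω : WithTop ℝ))},
      ∫ ω, Real.exp (-r * τ.1 ω) * v (X (τ.1 ω) ω) ∂(P x) ≤ v x) :
    ∀ x, v x = ⨆ τ : {τ : Ω → ℝ // IsStoppingTime ℱ (fun ω => (τ ω : WithTop ℝ))},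
      ∫ ω, Real.exp (-r * τ.1 ω) * ψ (X (τ.1 ω) ω) ∂(P x) := by
  intro x
  haveI := hP x
  set τ0 : {τ : Ω → ℝ // IsStoppingTime ℱ (fun ω => (τ ω : WithTop ℝ))} :=
    ⟨fun _ => 0, isStoppingTime_const ℱ 0⟩ with hτ0
  haveI : Nonempty {τ : Ω → ℝ // IsStoppingTime ℱ (fun ω => (τ ω : WithTop ℝ))} := ⟨τ0⟩
  obtain ⟨hp0, hp1⟩ := hp
  -- ψ ≤ v
  have hψv : ∀ y, ψ y ≤ v y := by
    intro y
    have h1 : (∫ ω, Real.exp (-r * τ0.1 ω) *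
        (p * ψ (X (τ0.1 ω) ω) + (1 - p) * v (X (τ0.1 ω) ω)) ∂(P y)) ≤ v y := by
      rw [hfix y]
      exact le_ciSup (hBddv y) τ0
    have h2 : (∫ ω, Real.exp (-r * τ0.1 ω) *
        (p * ψ (X (τ0.1 ω) ω) + (1 - p) * v (X (τ0.1 ω) ω)) ∂(P y))
        = p * ψ y + (1 - p) * v y := by
      rw [show (∫ ω, Real.exp (-r * τ0.1 ω) *
        (p * ψ (X (τ0.1 ω) ω) + (1 - p) * v (X (τ0.1 ω) ω)) ∂(P y))
        = ∫ _ω, (p * ψ y + (1 - p) * v y) ∂(P y) from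
        integral_congr_ae ((hinit y).mono (fun ω hω => by simp [hτ0, hω]))]
      simp
    nlinarith [h2 ▸ h1]
  set S := ⨆ σ : {τ : Ω → ℝ // IsStoppingTime ℱ (fun ω => (τ ω : WithTop ℝ))},
      ∫ ω, Real.exp (-r * σ.1 ω) * ψ (X (σ.1 ω) ω) ∂(P x) with hS
  apply le_antisymm
  · -- v x ≤ S
    have key : (⨆ τ : {τ : Ω → ℝ // IsStoppingTime ℱ (fun ω => (τ ω : WithTop ℝ))},
        ∫ ω, Real.exp (-r * τ.1 ω) *
          (p * ψ (X (τ.1 ω) ω) + (1 - p) * v (X (τ.1 ω) ω)) ∂(P x))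
        ≤ p * S + (1 - p) * v x := by
      apply ciSup_le
      intro τ
      have hsplit : (∫ ω, Real.exp (-r * τ.1 ω) *
          (p * ψ (X (τ.1 ω) ω) + (1 - p) * v (X (τ.1 ω) ω)) ∂(P x))
          = p * (∫ ω, Real.exp (-r * τ.1 ω) * ψ (X (τ.1 ω) ω) ∂(P x))
            + (1 - p) * (∫ ω, Real.exp (-r * τ.1 ω) * v (X (τ.1 ω) ω) ∂(P x)) := by
        rw [← integral_const_mul, ← integral_const_mul,
          ← integral_add ((hintψ x τ).const_mul p) ((hintv x τ).const_mul (1 - p))]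
        apply integral_congr_ae
        filter_upwards with ω
        ring
      rw [hsplit]
      have hψle : (∫ ω, Real.exp (-r * τ.1 ω) * ψ (X (τ.1 ω) ω) ∂(P x)) ≤ S :=
        le_ciSup (hBddψ x) τ
      have hvle := hsuper x τ
      nlinarith
    nlinarith [hfix x, key]
  · -- sup E[e^{-rτ} ψ] ≤ v x
    apply ciSup_le
    intro τ
    refine le_trans ?_ (hsuper x τ)
    apply integral_mono (hintψ x τ) (hintv x τ)
    intro ω
    exact mul_le_mul_of_nonneg_left (hψv _) (Real.exp_nonneg _)
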